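/- There is no probability distribution q on {0,1}^4 with coordinates labelled (a,b,c,d) whose correlators satisfy E_q(a,b) = 1/√2, E_q(a,d) = −1/√2, E_q(c,b) = −1/√2 and E_q(c,d) = −1/√2. -/

import Mathlib

/-- The sign `(-1)^u` associated to an outcome `u ∈ {0,1}`. -/
noncomputable def sgn (u : Fin 2) : ℝ := (-1 : ℝ) ^ (u : ℕ)

/-- Correlator of the coordinates `a` and `b` of a distribution `q` on `{0,1}^4`
with coordinates `(a, b, c, d)`. -/
noncomputable def Eab (q : Fin 2 → Fin 2 → Fin 2 → Fin 2 → ℝ) : ℝ :=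
  ∑ a : Fin 2, ∑ b : Fin 2, ∑ c : Fin 2, ∑ d : Fin 2, q a b c d * sgn a * sgn b

/-- Correlator of the coordinates `a` and `d`. -/
noncomputable def Ead (q : Fin 2 → Fin 2 → Fin 2 → Fin 2 → ℝ) : ℝ :=
  ∑ a : Fin 2, ∑ b : Fin 2, ∑ c : Fin 2, ∑ d : Fin 2, q a b c d * sgn a * sgn d

/-- Correlator of the coordinates `c` and `b`. -/
noncomputable def Ecb (q : Fin 2 → Fin 2 → Fin 2 → Fin 2 → ℝ) : ℝ :=
  ∑ a : Fin 2, ∑ b : Fin 2, ∑ c : Fin 2, ∑ d : Fin 2, q a b c d * sgn c * sgn b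

/-- Correlator of the coordinates `c` and `d`. -/
noncomputable def Ecd (q : Fin 2 → Fin 2 → Fin 2 → Fin 2 → ℝ) : ℝ :=
  ∑ a : Fin 2, ∑ b : Fin 2, ∑ c : Fin 2, ∑ d : Fin 2, q a b c d * sgn c * sgn d

/-- No probability distribution on `{0,1}^4` has correlators
`E(a,b) = 1/√2` and `E(a,d) = E(c,b) = E(c,d) = −1/√2` (the singlet-state quantum
correlations of the Local Friendliness scenario). -/
theorem no_joint_distribution_for_LF_correlations :
    ¬ ∃ q : Fin 2 → Fin 2 → Fin 2 → Fin 2 → ℝ,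
        (∀ a b c d, 0 ≤ q a b c d) ∧
        (∑ a : Fin 2, ∑ b : Fin 2, ∑ c : Fin 2, ∑ d : Fin 2, q a b c d = 1) ∧
        Eab q = 1 / Real.sqrt 2 ∧
        Ead q = -(1 / Real.sqrt 2) ∧
        Ecb q = -(1 / Real.sqrt 2) ∧
        Ecd q = -(1 / Real.sqrt 2) := by
  rintro ⟨q, hpos, hsum, hab, had, hcb, hcd⟩
  have key : Eab q - Ead q - Ecb q - Ecd q ≤ 2 := by
    simp only [Eab, Ead, Ecb, Ecd, Fin.sum_univ_two, sgn] at *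
    norm_num at hsum hab had hcb hcd ⊢
    have h := fun a b c d => hpos a b c d
    linarith [hpos 0 0 0 0, hpos 0 0 0 1, hpos 0 0 1 0, hpos 0 0 1 1,
      hpos 0 1 0 0, hpos 0 1 0 1, hpos 0 1 1 0, hpos 0 1 1 1,
      hpos 1 0 0 0, hpos 1 0 0 1, hpos 1 0 1 0, hpos 1 0 1 1,
      hpos 1 1 0 0, hpos 1 1 0 1, hpos 1 1 1 0, hpos 1 1 1 1]
  rw [hab, had, hcb, hcd] at key
  have hs : Real.sqrt 2 > 0 := by positivity
  have hsq : Real.sqrt 2 * Real.sqrt 2 = 2 := Real.mul_self_sqrt (by norm_num)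
  have h1 : (1 / Real.sqrt 2) * Real.sqrt 2 = 1 := div_mul_cancel₀ 1 (ne_of_gt hs)
  nlinarith [key, hs, hsq, h1]
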